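/- Weighted Dirichlet estimate on a box: Let l be a positive integer, L₁, …, L_l > 0, and Ω = {x ∈ ℝˡ : |x_k| ≤ L_k for all k}. Let u : ℝˡ → ℝ be continuously differentiable with u(x) = 0 for every x on the boundary of Ω (i.e., whenever |x_k| = L_k for some k), and let D₁, …, D_l > 0. Then Σ_{k=1}^{l} D_k · ∫_Ω (∂u/∂x_k)(x)² dx ≥ (π²/4) · (Σ_{k=1}^{l} D_k/L_k²) · ∫_Ω u(x)² dx. -/

import Mathlib

open MeasureTheory Real Filter Set Topology intervalIntegral

/-- endpoint limit helper -/
lemma tendsto_endpoint_aux (f c s : ℝ → ℝ) (p f' c' : ℝ)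
    (hf : HasDerivAt f f' p) (hc : HasDerivAt c c' p)
    (hf0 : f p = 0) (hc0 : c p = 0) (hc' : c' ≠ 0)
    (hs : Continuous s) (l : Filter ℝ) (hl : l ≤ 𝓝[≠] p) :
    Tendsto (fun b => s b * (f b) ^ 2 / c b) l (𝓝 0) := by
  have hln : l ≤ 𝓝 p := hl.trans nhdsWithin_le_nhds
  have hsf : Tendsto (slope f p) l (𝓝 f') :=
    (hasDerivAt_iff_tendsto_slope.1 hf).mono_left hl
  have hsc : Tendsto (slope c p) l (𝓝 c') :=
    (hasDerivAt_iff_tendsto_slope.1 hc).mono_left hl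
  have hne : ∀ᶠ b in l, slope c p b ≠ 0 := hsc.eventually_ne hc'
  have hbp : ∀ᶠ b in l, b ≠ p := hl self_mem_nhdsWithin
  have hsub : Tendsto (fun b : ℝ => b - p) l (𝓝 0) := by
    have h0 : Tendsto (fun b : ℝ => b - p) (𝓝 p) (𝓝 (p - p)) :=
      (continuous_id.sub continuous_const).tendsto p
    rw [sub_self] at h0
    exact h0.comp hln
  have key : Tendsto (fun b => s b * (slope f p b) ^ 2 / slope c p b * (b - p)) l
      (𝓝 (s p * f' ^ 2 / c' * 0)) :=
    ((((hs.tendsto p).comp hln).mul (hsf.pow 2)).div hsc hc').mul hsub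
  rw [mul_zero] at key
  refine key.congr' ?_
  filter_upwards [hne, hbp] with b hb1 hb2
  have hbp' : b - p ≠ 0 := sub_ne_zero.2 hb2
  have hfb : f b = slope f p b * (b - p) := by
    rw [slope_def_field, hf0, sub_zero]; field_simp
  have hcb : c b = slope c p b * (b - p) := by
    rw [slope_def_field, hc0, sub_zero]; field_simp
  rw [hfb, hcb]
  field_simp

lemma one_dim_poincare (L : ℝ) (hL : 0 < L) (u : ℝ → ℝ) (hu : ContDiff ℝ 1 u)
    (hm : u (-L) = 0) (hp : u L = 0) :
    (Real.pi / (2 * L)) ^ 2 * ∫ t in Icc (-L) L, (u t) ^ 2 ≤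
      ∫ t in Icc (-L) L, (deriv u t) ^ 2 := by
  set μ := Real.pi / (2 * L) with hμdef
  have hμ : 0 < μ := div_pos Real.pi_pos (by linarith)
  set c : ℝ → ℝ := fun t => Real.cos (μ * t) with hcdef
  set s : ℝ → ℝ := fun t => Real.sin (μ * t) with hsdef
  set F : ℝ → ℝ := fun t => s t * (u t) ^ 2 / c t with hFdef
  have hud : Differentiable ℝ u := hu.differentiable one_ne_zero
  have hu' : Continuous (deriv u) := hu.continuous_deriv le_rfl
  set g : ℝ → ℝ := fun t => (deriv u t) ^ 2 - μ ^ 2 * (u t) ^ 2 with hgdef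
  have hgc : Continuous g := ((hu'.pow 2).sub (continuous_const.mul ((hud.continuous).pow 2)))
  have hμL : μ * L = Real.pi / 2 := by
    rw [hμdef]; field_simp
  -- derivatives of c and s
  have hcD : ∀ t : ℝ, HasDerivAt c (-(μ * s t)) t := by
    intro t
    have h1 : HasDerivAt (fun t : ℝ => μ * t) μ t := by
      simpa using (hasDerivAt_id t).const_mul μ
    exact ((Real.hasDerivAt_cos (μ * t)).comp t h1).congr_deriv (by simp only [hsdef]; ring)
  have hsD : ∀ t : ℝ, HasDerivAt s (μ * c t) t := by
    intro t
    have h1 : HasDerivAt (fun t : ℝ => μ * t) μ t := by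
      simpa using (hasDerivAt_id t).const_mul μ
    exact ((Real.hasDerivAt_sin (μ * t)).comp t h1).congr_deriv (by simp only [hcdef]; ring)
  -- Step A: inner inequality
  have stepA : ∀ a b : ℝ, -L < a → a ≤ b → b < L →
      μ * (F a - F b) ≤ ∫ t in a..b, g t := by
    intro a b ha hab hb
    have hcpos : ∀ t ∈ Set.uIcc a b, 0 < c t := by
      intro t ht
      rw [Set.uIcc_of_le hab] at ht
      apply Real.cos_pos_of_mem_Ioo
      have h1 : -L < t := lt_of_lt_of_le ha ht.1
      have h2 : t < L := lt_of_le_of_lt ht.2 hb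
      constructor
      · have := mul_lt_mul_of_pos_left h1 hμ
        simp only [mul_neg] at this
        rw [hμL] at this
        linarith
      · have := mul_lt_mul_of_pos_left h2 hμ
        rw [hμL] at this
        linarith
    set W : ℝ → ℝ := fun t => (deriv u t * c t + μ * u t * s t) / (c t) ^ 2 with hWdef
    set Dv : ℝ → ℝ := fun t => ((c t) ^ 2 * (W t) ^ 2 - g t) / μ with hDdef
    have hFD : ∀ t ∈ Set.uIcc a b, HasDerivAt F (Dv t) t := by
      intro t ht
      have hct : c t ≠ 0 := (hcpos t ht).ne'
      have h1 : HasDerivAt (fun t => s t * (u t) ^ 2) ((μ * c t) * (u t) ^ 2 + s t * (2 * u t * deriv u t)) t := by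
        have := (hsD t).mul (((hud t).hasDerivAt).pow 2)
        exact this.congr_deriv (by simp only [Pi.pow_apply]; push_cast; ring)
      have h2 : HasDerivAt F ((((μ * c t) * (u t) ^ 2 + s t * (2 * u t * deriv u t)) * c t - (s t * (u t) ^ 2) * (-(μ * s t))) / (c t) ^ 2) t :=
        h1.div (hcD t) hct
      convert h2 using 1
      have hsq : (s t) ^ 2 = 1 - (c t) ^ 2 := by
        have := Real.sin_sq_add_cos_sq (μ * t)
        simp only [hsdef, hcdef]
        nlinarith [this]
      rw [hDdef, hWdef, hgdef]
      field_simp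
      nlinarith [hsq, sq_nonneg (c t)]
    have hDvcont : ContinuousOn Dv (Set.uIcc a b) := by
      have hccont : Continuous c := (Real.continuous_cos.comp (continuous_const.mul continuous_id))
      have hscont : Continuous s := (Real.continuous_sin.comp (continuous_const.mul continuous_id))
      have hWcont : ContinuousOn W (Set.uIcc a b) := by
        apply ContinuousOn.div
        · exact ((hu'.mul hccont).add ((continuous_const.mul hud.continuous).mul hscont)).continuousOn
        · exact (hccont.pow 2).continuousOn
        · intro t ht; exact pow_ne_zero 2 (hcpos t ht).ne'
      exact ((((hccont.pow 2).continuousOn.mul (hWcont.pow 2)).sub hgc.continuousOn).div_const μ)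
    have hftc : ∫ t in a..b, Dv t = F b - F a :=
      intervalIntegral.integral_eq_sub_of_hasDerivAt hFD (hDvcont.intervalIntegrable)
    have hsplit : ∫ t in a..b, g t = (∫ t in a..b, (c t * W t) ^ 2) - μ * (F b - F a) := by
      rw [← hftc, ← intervalIntegral.integral_const_mul, ← intervalIntegral.integral_sub]
      · apply intervalIntegral.integral_congr
        intro t ht
        have hct : c t ≠ 0 := (hcpos t ht).ne'
        simp only [hDdef]
        field_simp
        ring
      · have hccont : Continuous c := (Real.continuous_cos.comp (continuous_const.mul continuous_id))
        have hscont : Continuous s := (Real.continuous_sin.comp (continuous_const.mul continuous_id))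
        have hWcont : ContinuousOn W (Set.uIcc a b) := by
          apply ContinuousOn.div
          · exact ((hu'.mul hccont).add ((continuous_const.mul hud.continuous).mul hscont)).continuousOn
          · exact (hccont.pow 2).continuousOn
          · intro t ht; exact pow_ne_zero 2 (hcpos t ht).ne'
        exact ((hccont.continuousOn.mul hWcont).pow 2).intervalIntegrable
      · exact (hDvcont.const_smul μ).intervalIntegrable
    have hnn : 0 ≤ ∫ t in a..b, (c t * W t) ^ 2 := by
      apply intervalIntegral.integral_nonneg hab
      intro t _; positivity
    rw [hsplit]
    linarith
  -- Step B : limits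
  have hccont : Continuous c := (Real.continuous_cos.comp (continuous_const.mul continuous_id))
  have hscont : Continuous s := (Real.continuous_sin.comp (continuous_const.mul continuous_id))
  have hsL : s L = 1 := by
    simp only [hsdef]; rw [hμL, Real.sin_pi_div_two]
  have hsmL : s (-L) = -1 := by
    simp only [hsdef]
    rw [mul_neg, hμL, Real.sin_neg, Real.sin_pi_div_two]
  have hcL : c L = 0 := by
    simp only [hcdef]; rw [hμL, Real.cos_pi_div_two]
  have hcmL : c (-L) = 0 := by
    simp only [hcdef]
    rw [mul_neg, hμL, Real.cos_neg, Real.cos_pi_div_two]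
  have hFb : Tendsto F (𝓝[<] L) (𝓝 0) := by
    apply tendsto_endpoint_aux u c s L (deriv u L) (-(μ * s L))
      ((hud L).hasDerivAt) (hcD L) hp hcL _ hscont (𝓝[<] L)
      (nhdsWithin_mono L (fun x hx => ne_of_lt hx))
    rw [hsL]; simpa using hμ.ne'
  have hFa : Tendsto F (𝓝[>] (-L)) (𝓝 0) := by
    apply tendsto_endpoint_aux u c s (-L) (deriv u (-L)) (-(μ * s (-L)))
      ((hud (-L)).hasDerivAt) (hcD (-L)) hm hcmL _ hscont (𝓝[>] (-L))
      (nhdsWithin_mono (-L) (fun x hx => ne_of_gt hx))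
    rw [hsmL]; simpa using hμ.ne'
  set lf : Filter (ℝ × ℝ) := 𝓝[>] (-L) ×ˢ 𝓝[<] L with hlf
  haveI : lf.NeBot := by
    rw [hlf]; exact Filter.prod_neBot.2 ⟨inferInstance, inferInstance⟩
  have hgi : ∀ a b : ℝ, IntervalIntegrable g volume a b := fun a b =>
    hgc.intervalIntegrable a b
  have hPcont : Continuous (fun x => ∫ t in (-L)..x, g t) :=
    intervalIntegral.continuous_primitive hgi (-L)
  have hTI : Tendsto (fun ab : ℝ × ℝ => ∫ t in ab.1..ab.2, g t) lf
      (𝓝 (∫ t in (-L)..L, g t)) := by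
    have heq : ∀ ab : ℝ × ℝ, ∫ t in ab.1..ab.2, g t =
        (∫ t in (-L)..ab.2, g t) - ∫ t in (-L)..ab.1, g t := by
      intro ab
      rw [← intervalIntegral.integral_add_adjacent_intervals (hgi (-L) ab.1) (hgi ab.1 ab.2)]
      ring
    simp only [heq]
    have h2 : Tendsto (fun ab : ℝ × ℝ => ∫ t in (-L)..ab.2, g t) lf
        (𝓝 (∫ t in (-L)..L, g t)) :=
      (hPcont.tendsto L).comp (tendsto_snd.mono_right nhdsWithin_le_nhds)
    have h1 : Tendsto (fun ab : ℝ × ℝ => ∫ t in (-L)..ab.1, g t) lf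
        (𝓝 (∫ t in (-L)..(-L), g t)) :=
      (hPcont.tendsto (-L)).comp (tendsto_fst.mono_right nhdsWithin_le_nhds)
    rw [intervalIntegral.integral_same] at h1
    simpa using h2.sub h1
  have hTF : Tendsto (fun ab : ℝ × ℝ => μ * (F ab.1 - F ab.2)) lf (𝓝 0) := by
    have := ((hFa.comp (tendsto_fst (g := 𝓝[<] L))).sub
      (hFb.comp (tendsto_snd (f := 𝓝[>] (-L))))).const_mul μ
    simpa using this
  have hev : ∀ᶠ ab : ℝ × ℝ in lf, μ * (F ab.1 - F ab.2) ≤ ∫ t in ab.1..ab.2, g t := by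
    have hmem : Set.Ioc (-L) 0 ×ˢ Set.Ico 0 L ∈ lf :=
      Filter.prod_mem_prod (Ioc_mem_nhdsGT_of_mem ⟨le_refl _, by linarith⟩)
        (Ico_mem_nhdsLT_of_mem ⟨by linarith, le_refl L⟩)
    refine Filter.eventually_of_mem hmem ?_
    rintro ⟨a, b⟩ ⟨ha, hb⟩
    exact stepA a b ha.1 (ha.2.trans hb.1) hb.2
  have h0 : (0 : ℝ) ≤ ∫ t in (-L)..L, g t := le_of_tendsto_of_tendsto hTF hTI hev
  -- conclude
  have hsplit2 : ∫ t in (-L)..L, g t =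
      (∫ t in (-L)..L, (deriv u t) ^ 2) - μ ^ 2 * ∫ t in (-L)..L, (u t) ^ 2 := by
    rw [hgdef, ← intervalIntegral.integral_const_mul, ← intervalIntegral.integral_sub (f := fun t => deriv u t ^ 2) (g := fun t => μ ^ 2 * u t ^ 2)
      ((hu'.pow 2).intervalIntegrable _ _)
      ((continuous_const.mul (hud.continuous.pow 2)).intervalIntegrable _ _)]
  have hLL : (-L) ≤ L := by linarith
  rw [MeasureTheory.integral_Icc_eq_integral_Ioc, MeasureTheory.integral_Icc_eq_integral_Ioc,
    ← intervalIntegral.integral_of_le hLL, ← intervalIntegral.integral_of_le hLL]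
  rw [hsplit2] at h0
  linarith

section aux


variable {n : ℕ}

lemma continuous_insertNth' (k : Fin (n + 1)) :
    Continuous fun z : ℝ × (Fin n → ℝ) => (k.insertNth z.1 z.2 : Fin (n + 1) → ℝ) := by
  refine continuous_pi ?_
  intro i
  refine Fin.succAboveCases k ?_ ?_ i
  · simpa [Fin.insertNth_apply_same] using continuous_fst
  · intro j
    simp only [Fin.insertNth_apply_succAbove]; exact (continuous_apply j).comp continuous_snd

/-- Slicing a set integral over a box along direction `k`. -/
lemma box_slice_integral (L : Fin (n + 1) → ℝ) (k : Fin (n + 1))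
    (F : (Fin (n + 1) → ℝ) → ℝ) (hF : Continuous F) :
    ∫ x in Set.univ.pi fun i => Set.Icc (-(L i)) (L i), F x =
      ∫ y in Set.univ.pi fun j => Set.Icc (-(L (k.succAbove j))) (L (k.succAbove j)),
        ∫ t in Set.Icc (-(L k)) (L k), F (k.insertNth t y) := by
  set Ω : Set (Fin (n + 1) → ℝ) := Set.univ.pi fun i => Set.Icc (-(L i)) (L i) with hΩ
  set B : Set (Fin n → ℝ) :=
    Set.univ.pi fun j => Set.Icc (-(L (k.succAbove j))) (L (k.succAbove j)) with hB
  set I : Set ℝ := Set.Icc (-(L k)) (L k) with hI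
  have hΩm : MeasurableSet Ω := MeasurableSet.univ_pi fun i => measurableSet_Icc
  have hBm : MeasurableSet B := MeasurableSet.univ_pi fun j => measurableSet_Icc
  have hIm : MeasurableSet I := measurableSet_Icc
  set e := MeasurableEquiv.piFinSuccAbove (fun _ : Fin (n + 1) => ℝ) k with he
  have hmp : MeasurePreserving e volume volume :=
    volume_preserving_piFinSuccAbove (fun _ : Fin (n + 1) => ℝ) k
  set f : ℝ × (Fin n → ℝ) → ℝ := fun z => F (k.insertNth z.1 z.2) with hf
  have hfc : Continuous f := hF.comp (continuous_insertNth' k)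
  have hTm : MeasurableSet (I ×ˢ B) := hIm.prod hBm
  have h1 : ∫ x in Ω, F x = ∫ x, Ω.indicator F x := (MeasureTheory.integral_indicator hΩm).symm
  have h2 : ∀ x, Ω.indicator F x = (I ×ˢ B).indicator f (e x) := by
    intro x
    have hex : e x = (x k, k.removeNth x) := rfl
    have hmem : e x ∈ I ×ˢ B ↔ x ∈ Ω := by
      rw [hex]
      simp only [Set.mem_prod, hI, hB, hΩ, Set.mem_pi, Set.mem_univ, forall_true_left]
      constructor
      · rintro ⟨h1', h2'⟩ i
        refine Fin.succAboveCases k ?_ ?_ i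
        · exact h1'
        · intro j; exact h2' j
      · intro h; exact ⟨h k, fun j => h _⟩
    by_cases hx : x ∈ Ω
    · rw [Set.indicator_of_mem hx, Set.indicator_of_mem (hmem.2 hx)]
      simp only [hf, hex, Fin.insertNth_self_removeNth]
    · rw [Set.indicator_of_notMem hx, Set.indicator_of_notMem (fun h => hx (hmem.1 h))]
  have h3 : ∫ x, Ω.indicator F x = ∫ z, (I ×ˢ B).indicator f z ∂(volume : Measure (ℝ × (Fin n → ℝ))) := by
    rw [show (fun x => Ω.indicator F x) = fun x => (I ×ˢ B).indicator f (e x) from funext h2]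
    exact hmp.integral_comp' ((I ×ˢ B).indicator f)
  have h4 : ∫ z, (I ×ˢ B).indicator f z ∂(volume : Measure (ℝ × (Fin n → ℝ))) =
      ∫ z in I ×ˢ B, f z ∂(volume : Measure (ℝ × (Fin n → ℝ))) := MeasureTheory.integral_indicator hTm
  have hcomp : IsCompact (I ×ˢ B) :=
    isCompact_Icc.prod (isCompact_univ_pi fun _ => isCompact_Icc)
  have hint : Integrable f ((volume.restrict I).prod (volume.restrict B)) := by
    rw [Measure.prod_restrict, ← Measure.volume_eq_prod]
    exact hfc.continuousOn.integrableOn_compact hcomp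
  have h5 : ∫ z in I ×ˢ B, f z ∂(volume : Measure (ℝ × (Fin n → ℝ))) =
      ∫ y in B, ∫ t in I, f (t, y) := by
    rw [show (volume : Measure (ℝ × (Fin n → ℝ))).restrict (I ×ˢ B) =
        (volume.restrict I).prod (volume.restrict B) by
      rw [Measure.volume_eq_prod, Measure.prod_restrict]]
    exact integral_prod_symm f hint
  rw [h1, h3, h4, h5]

lemma box_slice_integrable (L : Fin (n + 1) → ℝ) (k : Fin (n + 1))
    (F : (Fin (n + 1) → ℝ) → ℝ) (hF : Continuous F) :
    Integrable
      (fun y : Fin n → ℝ => ∫ t in Set.Icc (-(L k)) (L k), F (k.insertNth t y))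
      (volume.restrict (Set.univ.pi fun j =>
        Set.Icc (-(L (k.succAbove j))) (L (k.succAbove j)))) := by
  set B : Set (Fin n → ℝ) :=
    Set.univ.pi fun j => Set.Icc (-(L (k.succAbove j))) (L (k.succAbove j)) with hB
  set I : Set ℝ := Set.Icc (-(L k)) (L k) with hI
  set f : ℝ × (Fin n → ℝ) → ℝ := fun z => F (k.insertNth z.1 z.2) with hf
  have hfc : Continuous f := hF.comp (continuous_insertNth' k)
  have hcomp : IsCompact (I ×ˢ B) :=
    isCompact_Icc.prod (isCompact_univ_pi fun _ => isCompact_Icc)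
  have hint : Integrable f ((volume.restrict I).prod (volume.restrict B)) := by
    rw [Measure.prod_restrict, ← Measure.volume_eq_prod]
    exact hfc.continuousOn.integrableOn_compact hcomp
  exact hint.integral_prod_right
end aux

/-- Weighted Dirichlet estimate on a box `Ω = Π_k [-L k, L k]`. -/
theorem weighted_dirichlet_estimate_box
    (l : ℕ) (hl : 0 < l) (L D : Fin l → ℝ)
    (hL : ∀ k, 0 < L k) (hD : ∀ k, 0 < D k)
    (u : (Fin l → ℝ) → ℝ) (hu : ContDiff ℝ 1 u)
    (hbd : ∀ x ∈ Set.univ.pi fun k => Set.Icc (-(L k)) (L k),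
      (∃ k, |x k| = L k) → u x = 0) :
    ∑ k : Fin l, D k *
        ∫ x in Set.univ.pi fun k => Set.Icc (-(L k)) (L k),
          (fderiv ℝ u x (Pi.single k 1)) ^ 2 ≥
      (Real.pi ^ 2 / 4) * (∑ k : Fin l, D k / (L k) ^ 2) *
        ∫ x in Set.univ.pi fun k => Set.Icc (-(L k)) (L k), (u x) ^ 2 := by
  rw [ge_iff_le]
  obtain ⟨n, rfl⟩ : ∃ n, l = n + 1 := ⟨l - 1, (Nat.succ_pred_eq_of_pos hl).symm⟩
  have huc : Continuous u := hu.continuous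
  have hfderiv : Continuous fun x => fderiv ℝ u x := hu.continuous_fderiv one_ne_zero
  have key : ∀ k : Fin (n + 1),
      (Real.pi / (2 * L k)) ^ 2 *
          ∫ x in Set.univ.pi fun i => Set.Icc (-(L i)) (L i), (u x) ^ 2 ≤
        ∫ x in Set.univ.pi fun i => Set.Icc (-(L i)) (L i),
          (fderiv ℝ u x (Pi.single k 1)) ^ 2 := by
    intro k
    have hFd : Continuous fun x => (fderiv ℝ u x (Pi.single k 1)) ^ 2 :=
      (hfderiv.clm_apply continuous_const).pow 2
    have hBm : MeasurableSet (Set.univ.pi fun j =>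
        Set.Icc (-(L (k.succAbove j))) (L (k.succAbove j))) :=
      MeasurableSet.univ_pi fun j => measurableSet_Icc
    rw [box_slice_integral L k _ hFd, box_slice_integral L k (fun x => (u x) ^ 2) (huc.pow 2),
      ← MeasureTheory.integral_const_mul]
    apply integral_mono_ae
      ((box_slice_integrable L k _ (huc.pow 2)).const_mul _)
      (box_slice_integrable L k _ hFd)
    refine (ae_restrict_iff' hBm).2 (ae_of_all _ ?_)
    intro y hy
    set v : ℝ → ℝ := fun t => u (k.insertNth t y) with hv
    have hA : ∀ t : ℝ, (k.insertNth t y : Fin (n + 1) → ℝ) =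
        (k.insertNth (0 : ℝ) y : Fin (n + 1) → ℝ) + t • (Pi.single k 1 : Fin (n + 1) → ℝ) := by
      intro t
      funext i
      simp only [Pi.add_apply, Pi.smul_apply, smul_eq_mul]
      refine Fin.succAboveCases k ?_ ?_ i
      · simp [Fin.insertNth_apply_same]
      · intro j
        simp [Fin.insertNth_apply_succAbove, Pi.single_eq_of_ne (Fin.succAbove_ne k j)]
    have hvc : ContDiff ℝ 1 v := by
      apply hu.comp
      rw [show (fun t : ℝ => (k.insertNth t y : Fin (n + 1) → ℝ)) =
          fun t => (k.insertNth (0 : ℝ) y : Fin (n + 1) → ℝ) + t • (Pi.single k 1 : Fin (n + 1) → ℝ) from funext hA]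
      exact contDiff_const.add (contDiff_id.smul contDiff_const)
    have hvd : ∀ t : ℝ, HasDerivAt v (fderiv ℝ u (k.insertNth t y) (Pi.single k 1)) t := by
      intro t
      have h1 : HasDerivAt (fun t : ℝ => (k.insertNth t y : Fin (n + 1) → ℝ))
          (Pi.single k 1) t := by
        rw [show (fun t : ℝ => (k.insertNth t y : Fin (n + 1) → ℝ)) =
            fun t => (k.insertNth (0 : ℝ) y : Fin (n + 1) → ℝ) + t • (Pi.single k 1 : Fin (n + 1) → ℝ) from funext hA]
        simpa using ((hasDerivAt_id t).smul_const (Pi.single k 1 : Fin (n + 1) → ℝ)).const_add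
          ((k.insertNth (0 : ℝ) y : Fin (n + 1) → ℝ))
      exact ((hu.differentiable one_ne_zero) _).hasFDerivAt.comp_hasDerivAt t h1
    have hmem : ∀ t : ℝ, t ∈ Set.Icc (-(L k)) (L k) →
        (k.insertNth t y : Fin (n + 1) → ℝ) ∈ Set.univ.pi fun i => Set.Icc (-(L i)) (L i) := by
      intro t ht
      rw [Set.mem_pi]
      intro i _
      refine Fin.succAboveCases k ?_ ?_ i
      · rw [Fin.insertNth_apply_same]; exact ht
      · intro j
        rw [Fin.insertNth_apply_succAbove]
        exact hy j (Set.mem_univ j)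
    have hb1 : v (L k) = 0 := by
      apply hbd _ (hmem (L k) ⟨by linarith [hL k], le_rfl⟩)
      exact ⟨k, by rw [Fin.insertNth_apply_same]; exact abs_of_pos (hL k)⟩
    have hb2 : v (-(L k)) = 0 := by
      apply hbd _ (hmem (-(L k)) ⟨le_rfl, by linarith [hL k]⟩)
      refine ⟨k, ?_⟩
      rw [Fin.insertNth_apply_same, abs_neg]
      exact abs_of_pos (hL k)
    have h1d := one_dim_poincare (L k) (hL k) v hvc hb2 hb1
    have hdv : deriv v = fun t => fderiv ℝ u (k.insertNth t y) (Pi.single k 1) :=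
      funext fun t => (hvd t).deriv
    rw [hdv] at h1d
    exact h1d
  -- sum up
  rw [Finset.mul_sum, Finset.sum_mul]
  apply Finset.sum_le_sum
  intro k _
  have hLk : L k ≠ 0 := (hL k).ne'
  have hcst : Real.pi ^ 2 / 4 * (D k / L k ^ 2) *
      (∫ x in Set.univ.pi fun i => Set.Icc (-(L i)) (L i), (u x) ^ 2) =
      D k * ((Real.pi / (2 * L k)) ^ 2 *
        ∫ x in Set.univ.pi fun i => Set.Icc (-(L i)) (L i), (u x) ^ 2) := by
    field_simp
    ring
  rw [hcst]
  exact mul_le_mul_of_nonneg_left (key k) (hD k).le
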